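/- If the reduced equation Δv = λ e^{u_0+v}(e^{u_0+v} − 1)^5 + 4πN/Vol(V) admits a subsolution W_−, then it admits a solution w with W_−(x) ≤ w(x) ≤ −u_0(x) for all x ∈ V. -/

import Mathlib

open Real




/-- The graph Laplacian: `Δu(x) = (1/μ(x)) Σ_y w(x,y)(u(y) − u(x))`. -/
noncomputable def lapl {V : Type*} [Fintype V] (μ : V → ℝ) (w : V → V → ℝ) (u : V → ℝ) (x : V) : ℝ :=
  (1 / μ x) * ∑ y, w x y * (u y - u x)

/-- The integral on the graph: `∫_V f dμ = Σ_x μ(x) f(x)`. -/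
noncomputable def integ {V : Type*} [Fintype V] (μ : V → ℝ) (f : V → ℝ) : ℝ := ∑ x, μ x * f x

/-- The volume of the graph: `Vol(V) = Σ_x μ(x)`. -/
noncomputable def vol {V : Type*} [Fintype V] (μ : V → ℝ) : ℝ := ∑ x, μ x

/-- The Dirac mass at `p`. -/
noncomputable def dirac {V : Type*} [DecidableEq V] (μ : V → ℝ) (p x : V) : ℝ :=
  if x = p then 1 / μ p else 0

/-- The squared length of the gradient: `|∇u|²(x) = (1/(2μ(x))) Σ_y w(x,y)(u(y) − u(x))²`. -/
noncomputable def gradSq {V : Type*} [Fintype V] (μ : V → ℝ) (w : V → V → ℝ) (u : V → ℝ) (x : V) : ℝ :=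
  (1 / (2 * μ x)) * ∑ y, w x y * (u y - u x) ^ 2

/-- The gradient form `Γ(u,φ)(x) = (1/(2μ(x))) Σ_y w(x,y)(u(y) − u(x))(φ(y) − φ(x))`. -/
noncomputable def gamma {V : Type*} [Fintype V] (μ : V → ℝ) (w : V → V → ℝ) (u φ : V → ℝ) (x : V) : ℝ :=
  (1 / (2 * μ x)) * ∑ y, w x y * (u y - u x) * (φ y - φ x)

/-- `u` solves the generalized Chern–Simons equation
    `Δu = λ e^u (e^u − 1)^5 + 4π Σ_s δ_{p_s}` with parameter `lam`. -/
noncomputable def isSol {V : Type*} [Fintype V] [DecidableEq V] (μ : V → ℝ) (w : V → V → ℝ)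
    {N : ℕ} (p : Fin N → V) (lam : ℝ) (u : V → ℝ) : Prop :=
  ∀ x, lapl μ w u x =
    lam * Real.exp (u x) * (Real.exp (u x) - 1) ^ 5 + 4 * π * ∑ s, dirac μ (p s) x

/-- The energy functional
    `I_λ(v) = ∫_V [ (1/2)|∇v|² + (λ/6)(e^{u₀+v} − 1)^6 + (4πN/Vol(V)) v ] dμ`. -/
noncomputable def energy {V : Type*} [Fintype V] (μ : V → ℝ) (w : V → V → ℝ)
    (u0 : V → ℝ) (N : ℕ) (lam : ℝ) (v : V → ℝ) : ℝ :=
  integ μ (fun x => (1 / 2) * gradSq μ w v x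
    + (lam / 6) * (Real.exp (u0 x + v x) - 1) ^ 6 + (4 * π * N / vol μ) * v x)

/-- The Sobolev `W^{1,2}` norm `(∫_V (|∇v|² + v²) dμ)^{1/2}`. -/
noncomputable def sobNorm {V : Type*} [Fintype V] (μ : V → ℝ) (w : V → V → ℝ)
    (v : V → ℝ) : ℝ :=
  Real.sqrt (integ μ (fun x => gradSq μ w v x + v x ^ 2))

/-- The derivative of the energy functional at `v` in direction `φ`:
    `∫_V Γ(v,φ) dμ + λ ∫_V e^{u₀+v}(e^{u₀+v} − 1)^5 φ dμ + (4πN/Vol(V)) ∫_V φ dμ`. -/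
noncomputable def dEnergy {V : Type*} [Fintype V] (μ : V → ℝ) (w : V → V → ℝ)
    (u0 : V → ℝ) (N : ℕ) (lam : ℝ) (v φ : V → ℝ) : ℝ :=
  integ μ (gamma μ w v φ)
    + lam * integ μ (fun x => Real.exp (u0 x + v x) * (Real.exp (u0 x + v x) - 1) ^ 5 * φ x)
    + (4 * π * N / vol μ) * integ μ φ

section AuxLemmas

variable {V : Type*} [Fintype V]

lemma lapl_add' (μ : V → ℝ) (w : V → V → ℝ) (u v : V → ℝ) (x : V) :
    lapl μ w (u + v) x = lapl μ w u x + lapl μ w v x := by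
  simp only [lapl, Pi.add_apply]
  rw [← mul_add, ← Finset.sum_add_distrib]
  congr 1
  exact Finset.sum_congr rfl fun y _ => by ring

lemma lapl_neg' (μ : V → ℝ) (w : V → V → ℝ) (u : V → ℝ) (x : V) :
    lapl μ w (-u) x = -lapl μ w u x := by
  simp only [lapl, Pi.neg_apply]
  rw [show (∑ y, w x y * (-u y - -u x)) = -∑ y, w x y * (u y - u x) by
    rw [← Finset.sum_neg_distrib]; exact Finset.sum_congr rfl fun y _ => by ring]
  ring

lemma lapl_sub' (μ : V → ℝ) (w : V → V → ℝ) (u v : V → ℝ) (x : V) :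
    lapl μ w (u - v) x = lapl μ w u x - lapl μ w v x := by
  simp only [lapl, Pi.sub_apply]
  rw [← mul_sub, ← Finset.sum_sub_distrib]
  congr 1
  exact Finset.sum_congr rfl fun y _ => by ring

/-- The operator `u ↦ Δu − Ku` as a linear map. -/
noncomputable def laplK (μ : V → ℝ) (w : V → V → ℝ) (K : ℝ) : (V → ℝ) →ₗ[ℝ] (V → ℝ) where
  toFun u := fun x => lapl μ w u x - K * u x
  map_add' u v := by
    funext x
    simp only [Pi.add_apply, lapl_add']
    ring
  map_smul' a u := by
    funext x
    simp only [Pi.smul_apply, smul_eq_mul, RingHom.id_apply, lapl]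
    rw [show (∑ y, w x y * (a * u y - a * u x)) = a * ∑ y, w x y * (u y - u x) by
      rw [Finset.mul_sum]; exact Finset.sum_congr rfl fun y _ => by ring]
    ring

lemma lapl_nonpos_at_max (μ : V → ℝ) (w : V → V → ℝ) (hnn : ∀ x y, 0 ≤ w x y)
    (hmu : ∀ x, 0 < μ x) (u : V → ℝ) {x : V} (hx : ∀ y, u y ≤ u x) :
    lapl μ w u x ≤ 0 := by
  apply mul_nonpos_of_nonneg_of_nonpos
  · exact (one_div_pos.mpr (hmu x)).le
  · exact Finset.sum_nonpos fun y _ =>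
      mul_nonpos_of_nonneg_of_nonpos (hnn x y) (sub_nonpos.2 (hx y))

lemma comp_nonpos [Nonempty V] (μ : V → ℝ) (w : V → V → ℝ) (hnn : ∀ x y, 0 ≤ w x y)
    (hmu : ∀ x, 0 < μ x) {K : ℝ} (hK : 0 < K) {u : V → ℝ}
    (h : ∀ x, 0 ≤ lapl μ w u x - K * u x) : ∀ x, u x ≤ 0 := by
  obtain ⟨x, -, hx⟩ := Finset.exists_max_image Finset.univ u Finset.univ_nonempty
  have h1 : lapl μ w u x ≤ 0 :=
    lapl_nonpos_at_max μ w hnn hmu u (fun y => hx y (Finset.mem_univ y))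
  have h2 := h x
  have hux : u x ≤ 0 := by nlinarith
  exact fun y => le_trans (hx y (Finset.mem_univ y)) hux

lemma psi_hasDeriv (a t : ℝ) :
    HasDerivAt (fun t => 6 * t - Real.exp (a + t) * (Real.exp (a + t) - 1) ^ 5)
      (6 - (Real.exp (a + t) * (5 * (Real.exp (a + t) - 1) ^ 4 * Real.exp (a + t))
        + Real.exp (a + t) * (Real.exp (a + t) - 1) ^ 5)) t := by
  have hE : HasDerivAt (fun t => Real.exp (a + t)) (Real.exp (a + t)) t := by
    simpa [Function.comp_def] using (Real.hasDerivAt_exp (a + t)).comp t ((hasDerivAt_id t).const_add a)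
  have h5 : HasDerivAt (fun t => (Real.exp (a + t) - 1) ^ 5)
      (5 * (Real.exp (a + t) - 1) ^ 4 * Real.exp (a + t)) t := by
    simpa [Pi.pow_def] using (hE.sub_const 1).pow 5
  have hmul := hE.mul h5
  have hlin : HasDerivAt (fun t : ℝ => 6 * t) 6 t := by
    simpa using (hasDerivAt_id t).const_mul 6
  have := hlin.sub hmul
  exact this.congr_deriv (by ring)

lemma psi_mono (a : ℝ) :
    MonotoneOn (fun t => 6 * t - Real.exp (a + t) * (Real.exp (a + t) - 1) ^ 5)
      (Set.Iic (-a)) := by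
  apply monotoneOn_of_deriv_nonneg (convex_Iic _)
  · exact Continuous.continuousOn (by fun_prop)
  · exact fun t _ => (psi_hasDeriv a t).differentiableAt.differentiableWithinAt
  · intro t ht
    rw [interior_Iic] at ht
    rw [(psi_hasDeriv a t).deriv]
    set z := Real.exp (a + t) with hz
    have hz0 : 0 < z := Real.exp_pos _
    have hz1 : z < 1 := by
      rw [hz]; exact Real.exp_lt_one_iff.mpr (by linarith [Set.mem_Iio.mp ht])
    have h5 : z * (z - 1) ^ 5 ≤ 0 :=
      mul_nonpos_of_nonneg_of_nonpos hz0.le ((by decide : Odd 5).pow_nonpos (by linarith))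
    have h2 : (z - 1) ^ 2 ≤ 1 := by nlinarith
    have h4 : (z - 1) ^ 4 ≤ 1 := by nlinarith [sq_nonneg (z - 1)]
    have h40 : (0:ℝ) ≤ (z - 1) ^ 4 := by positivity
    have hzsq : z ^ 2 ≤ 1 := by nlinarith
    have h6 : z ^ 2 * (z - 1) ^ 4 ≤ 1 := mul_le_one₀ hzsq h40 h4
    nlinarith [h5, h6]

end AuxLemmas

set_option maxHeartbeats 1000000 in
/-- if the reduced equation admits a subsolution `W₋`, then it admits a
solution `w` with `W₋ ≤ w ≤ −u₀` on `V`. -/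
theorem solution_from_subsolution {V : Type*} [Fintype V] [DecidableEq V] [Nonempty V]
    (w : V → V → ℝ) (μ : V → ℝ)
    (hsymm : ∀ x y, w x y = w y x) (hnn : ∀ x y, 0 ≤ w x y)
    (hconn : ∀ x y : V, Relation.ReflTransGen (fun a b => 0 < w a b) x y)
    (hmu : ∀ x, 0 < μ x)
    (N : ℕ) (hN : 1 ≤ N) (p : Fin N → V) (hp : Function.Injective p)
    (u0 : V → ℝ)
    (hu0 : ∀ x, lapl μ w u0 x = -(4 * π * N / vol μ) + 4 * π * ∑ s, dirac μ (p s) x)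
    (lam : ℝ) (hlam : 0 < lam)
    (Wm : V → ℝ)
    (hWm : ∀ x, lapl μ w Wm x ≥
      lam * Real.exp (u0 x + Wm x) * (Real.exp (u0 x + Wm x) - 1) ^ 5 + 4 * π * N / vol μ) :
    ∃ v : V → ℝ,
      (∀ x, lapl μ w v x =
        lam * Real.exp (u0 x + v x) * (Real.exp (u0 x + v x) - 1) ^ 5 + 4 * π * N / vol μ) ∧
      (∀ x, Wm x ≤ v x) ∧ (∀ x, v x ≤ -u0 x) := by
  classical
  have hπ : (0:ℝ) < π := Real.pi_pos
  set c : ℝ := 4 * π * N / vol μ with hc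
  set K : ℝ := 6 * lam with hKdef
  have hKpos : 0 < K := by positivity
  have hdir : ∀ x, 0 ≤ ∑ s, dirac μ (p s) x := by
    intro x
    apply Finset.sum_nonneg
    intro s _
    unfold dirac
    split
    · exact (one_div_pos.mpr (hmu _)).le
    · exact le_rfl
  set Wp : V → ℝ := -u0 with hWp
  have hWpx : ∀ x, Wp x = -u0 x := fun _ => rfl
  -- monotonicity of the frozen nonlinearity
  have hmonot : ∀ (x : V) {s t : ℝ}, s ≤ t → t ≤ -u0 x →
      lam * Real.exp (u0 x + t) * (Real.exp (u0 x + t) - 1) ^ 5 - K * t ≤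
      lam * Real.exp (u0 x + s) * (Real.exp (u0 x + s) - 1) ^ 5 - K * s := by
    intro x s t hst ht
    have hmem_s : s ∈ Set.Iic (-u0 x) := le_trans hst ht
    have hmem_t : t ∈ Set.Iic (-u0 x) := ht
    have h := psi_mono (u0 x) hmem_s hmem_t hst
    have h2 := mul_le_mul_of_nonneg_left h hlam.le
    dsimp only at h2
    rw [hKdef]
    nlinarith [h2]
  -- the linear operator L = Δ - K
  set L := laplK μ w K with hLdef
  have hLapp : ∀ (u : V → ℝ) (x : V), L u x = lapl μ w u x - K * u x := by
    intro u x
    rw [hLdef]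
    rfl
  have hLker : ∀ u : V → ℝ, L u = 0 → u = 0 := by
    intro u hu
    have h0 : ∀ x, lapl μ w u x - K * u x = 0 := by
      intro x
      have h := congrFun hu x
      rw [hLapp u x] at h
      simpa using h
    have h1 : ∀ x, u x ≤ 0 := comp_nonpos μ w hnn hmu hKpos (fun x => (h0 x).ge)
    have h2 : ∀ x, (-u) x ≤ 0 := by
      apply comp_nonpos μ w hnn hmu hKpos
      intro x
      rw [lapl_neg']
      simp only [Pi.neg_apply]
      have := h0 x
      linarith
    funext x
    have := h2 x
    simp only [Pi.neg_apply, Pi.zero_apply] at this ⊢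
    linarith [h1 x]
  have hLinj : Function.Injective L := (injective_iff_map_eq_zero L).mpr hLker
  have hLsurj : Function.Surjective L := LinearMap.injective_iff_surjective.mp hLinj
  -- comparison principle via L
  have comp2 : ∀ a b : V → ℝ, (∀ x, L b x ≤ L a x) → ∀ x, a x ≤ b x := by
    intro a b hab
    have key : ∀ x, (a - b) x ≤ 0 := by
      apply comp_nonpos μ w hnn hmu hKpos
      intro x
      have hsub : L (a - b) x = L a x - L b x := by rw [map_sub]; rfl
      have : (0:ℝ) ≤ L (a - b) x := by rw [hsub]; linarith [hab x]
      rw [hLapp] at this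
      exact this
    intro x
    have := key x
    simp only [Pi.sub_apply] at this
    linarith
  -- the nonlinear RHS used for iteration
  set G : (V → ℝ) → (V → ℝ) := fun v x =>
    lam * Real.exp (u0 x + v x) * (Real.exp (u0 x + v x) - 1) ^ 5 + c - K * v x with hGdef
  have hGx : ∀ (v : V → ℝ) (x : V), G v x =
      lam * Real.exp (u0 x + v x) * (Real.exp (u0 x + v x) - 1) ^ 5 + c - K * v x :=
    fun _ _ => rfl
  have hGcont : Continuous G := by
    apply continuous_pi
    intro x
    have h1 : Continuous fun v : V → ℝ => v x := continuous_apply x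
    fun_prop
  have hGmono : ∀ (u v : V → ℝ), (∀ x, u x ≤ v x) → (∀ x, v x ≤ -u0 x) →
      ∀ x, G v x ≤ G u x := by
    intro u v huv hvWp x
    have := hmonot x (huv x) (hvWp x)
    rw [hGx, hGx]
    linarith
  -- Wm ≤ Wp
  have hWmWp : ∀ x, Wm x ≤ Wp x := by
    obtain ⟨x, -, hx⟩ := Finset.exists_max_image Finset.univ (Wm + u0) Finset.univ_nonempty
    have hmax : ∀ y, (Wm + u0) y ≤ (Wm + u0) x := fun y => hx y (Finset.mem_univ y)
    have h1 : lapl μ w (Wm + u0) x ≤ 0 := lapl_nonpos_at_max μ w hnn hmu _ hmax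
    rw [lapl_add'] at h1
    have h2 := hWm x
    have h3 := hu0 x
    have h4 := hdir x
    set z := Real.exp (u0 x + Wm x) with hzdef
    have hz0 : 0 < z := Real.exp_pos _
    have hd : (0:ℝ) ≤ 4 * π * ∑ s, dirac μ (p s) x :=
      mul_nonneg (by positivity) (hdir x)
    have h5 : lam * z * (z - 1) ^ 5 ≤ 0 := by nlinarith
    have h6 : z ≤ 1 := by
      by_contra hcon
      push_neg at hcon
      have hp5 : (0:ℝ) < (z - 1) ^ 5 := pow_pos (by linarith) 5
      nlinarith [mul_pos (mul_pos hlam hz0) hp5]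
    rw [hzdef] at h6
    have h7 : u0 x + Wm x ≤ 0 := Real.exp_le_one_iff.mp h6
    intro y
    have h8 := hmax y
    simp only [Pi.add_apply] at h8
    rw [hWpx]
    linarith
  -- supersolution property of Wp
  have hsuper : ∀ x, lapl μ w Wp x ≤
      lam * Real.exp (u0 x + Wp x) * (Real.exp (u0 x + Wp x) - 1) ^ 5 + c := by
    intro x
    have e0 : u0 x + Wp x = 0 := by rw [hWpx]; ring
    rw [e0]
    simp only [Real.exp_zero]
    have e1 : lapl μ w Wp x = -lapl μ w u0 x := by rw [hWp]; exact lapl_neg' μ w u0 x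
    rw [e1, hu0 x]
    have h4 : (0:ℝ) ≤ 4 * π * ∑ s, dirac μ (p s) x :=
      mul_nonneg (by positivity) (hdir x)
    norm_num
    linarith
  -- the iteration map T
  obtain ⟨T, hLT⟩ : ∃ T : (V → ℝ) → (V → ℝ), ∀ v, L (T v) = G v :=
    ⟨fun v => Function.surjInv hLsurj (G v), fun v => Function.surjInv_eq hLsurj (G v)⟩
  have hTle : ∀ v : V → ℝ, (∀ x, Wm x ≤ v x) → (∀ x, v x ≤ Wp x) →
      (∀ x, Wm x ≤ T v x) ∧ (∀ x, T v x ≤ Wp x) := by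
    intro v h1 h2
    have h2' : ∀ x, v x ≤ -u0 x := fun x => by rw [← hWpx]; exact h2 x
    constructor
    · apply comp2
      intro x
      have e1 : L (T v) x = G v x := congrFun (hLT v) x
      have e2 := hGmono Wm v h1 h2' x
      have e3 := hWm x
      have e4 : G Wm x ≤ L Wm x := by
        rw [hLapp, hGx]
        linarith
      rw [e1]
      linarith
    · apply comp2
      intro x
      have e1 : L (T v) x = G v x := congrFun (hLT v) x
      have e2 := hGmono v Wp h2 (fun x => (hWpx x).le) x
      have e3 := hsuper x
      have e4 : L Wp x ≤ G Wp x := by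
        rw [hLapp, hGx]
        linarith
      rw [e1]
      linarith
  have hTmono : ∀ u v : V → ℝ, (∀ x, u x ≤ v x) → (∀ x, v x ≤ Wp x) →
      ∀ x, T u x ≤ T v x := by
    intro u v huv hv
    have hv' : ∀ x, v x ≤ -u0 x := fun x => by rw [← hWpx]; exact hv x
    apply comp2
    intro x
    rw [congrFun (hLT u) x, congrFun (hLT v) x]
    exact hGmono u v huv hv' x
  -- the iteration sequence
  obtain ⟨seq, hseq0, hseqS⟩ :
      ∃ seq : ℕ → V → ℝ, seq 0 = Wp ∧ ∀ n, seq (n + 1) = T (seq n) :=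
    ⟨fun n => T^[n] Wp, rfl, fun n => Function.iterate_succ_apply' T n Wp⟩
  have hbnd : ∀ n, (∀ x, Wm x ≤ seq n x) ∧ (∀ x, seq n x ≤ Wp x) := by
    intro n
    induction n with
    | zero =>
      rw [hseq0]
      exact ⟨fun x => hWmWp x, fun x => le_rfl⟩
    | succ n ih =>
      rw [hseqS]
      exact hTle (seq n) ih.1 ih.2
  have hanti : ∀ n, ∀ x, seq (n + 1) x ≤ seq n x := by
    intro n
    induction n with
    | zero =>
      rw [hseqS 0, hseq0]
      intro x
      exact le_trans ((hTle Wp hWmWp (fun x => le_rfl)).2 x) le_rfl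
    | succ n ih =>
      rw [hseqS (n + 1)]
      intro x
      calc T (seq (n + 1)) x ≤ T (seq n) x := hTmono _ _ ih (hbnd n).2 x
        _ = seq (n + 1) x := by rw [hseqS n]
  -- the limit
  set v : V → ℝ := fun x => ⨅ n, seq n x with hvdef
  have hbdd : ∀ x, BddBelow (Set.range fun n => seq n x) := by
    intro x
    exact ⟨Wm x, by rintro r ⟨n, rfl⟩; exact (hbnd n).1 x⟩
  have hantix : ∀ x, Antitone fun n => seq n x := fun x =>
    antitone_nat_of_succ_le fun n => hanti n x
  have htend : ∀ x, Filter.Tendsto (fun n => seq n x) Filter.atTop (nhds (v x)) :=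
    fun x => tendsto_atTop_ciInf (hantix x) (hbdd x)
  have htendv : Filter.Tendsto seq Filter.atTop (nhds v) := tendsto_pi_nhds.mpr htend
  have htendv' : Filter.Tendsto (fun n => seq (n + 1)) Filter.atTop (nhds v) :=
    htendv.comp (Filter.tendsto_add_atTop_nat 1)
  have hLv : L v = G v := by
    have t1 : Filter.Tendsto (fun n => L (seq (n + 1))) Filter.atTop (nhds (L v)) :=
      (L.continuous_of_finiteDimensional.tendsto v).comp htendv'
    have t2 : Filter.Tendsto (fun n => G (seq n)) Filter.atTop (nhds (G v)) :=
      (hGcont.tendsto v).comp htendv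
    have heq : (fun n => L (seq (n + 1))) = fun n => G (seq n) := by
      funext n
      rw [hseqS]
      exact hLT (seq n)
    rw [heq] at t1
    exact tendsto_nhds_unique t1 t2
  refine ⟨v, ?_, ?_, ?_⟩
  · intro x
    have h := congrFun hLv x
    rw [hLapp, hGx] at h
    linarith
  · intro x
    exact le_ciInf fun n => (hbnd n).1 x
  · intro x
    have h1 : v x ≤ seq 0 x := ciInf_le (hbdd x) 0
    rw [hseq0, hWpx] at h1
    exact h1
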